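/- Hitting time to zero for the supremum chain (Lemma C.1): assume μ > Σ_{i=1}^I λ_i. Let τ̄ = min{t ≥ 0 : f̄(C, u_1⋯u_t) = 0} be the hitting time of the zero state for the supremum chain started from the full state C = (C_1,…,C_I) (where f̄(x, w) denotes iterated application along the word w, u_1 first). Then E[τ̄] ≤ Λ|C|/(μ − Σ_{i=1}^I λ_i). -/

import Mathlib

open MeasureTheory Finset ENNReal

namespace ATO

/-- Events: joint arrivals `d A` for subsets `A`, and joint-return services `s i j = r_j^i`. -/
inductive Ev (I : ℕ) where
  | d : Finset (Fin I) → Ev I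
  | s : Fin I → ℕ → Ev I

instance (I : ℕ) : MeasurableSpace (Ev I) := ⊤

/-- Valid events: arrivals for nonempty `A`, services `r_j^i` with `1 ≤ j ≤ C i`. -/
def ValidEv {I : ℕ} (C : Fin I → ℕ) : Ev I → Prop
  | .d A => A.Nonempty
  | .s i j => 1 ≤ j ∧ j ≤ C i

/-- The detailed state space `N`: coordinates indexed by the nonempty subsets `A`
(the `∅` coordinate is forced to `0`), with `∑_{A ∋ i} n_A ≤ C_i` for every `i`. -/
def Nspace {I : ℕ} (C : Fin I → ℕ) : Set (Finset (Fin I) → ℕ) :=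
  {n | n ∅ = 0 ∧ ∀ i, (∑ A ∈ Finset.univ.filter (fun A => i ∈ A), n A) ≤ C i}

/-- The projection `ψ : N → X`, `ψ(n)_i = ∑_{A ∋ i} n_A`. -/
def psi {I : ℕ} (n : Finset (Fin I) → ℕ) : Fin I → ℕ :=
  fun i => ∑ A ∈ Finset.univ.filter (fun A => i ∈ A), n A

/-- The projected state space `X = {0,…,C 1} × ⋯ × {0,…,C I}`. -/
def Xspace {I : ℕ} (C : Fin I → ℕ) : Set (Fin I → ℕ) := {x | ∀ i, x i ≤ C i}

/-- The enumeration `A_k^i` of the subsets of `{i,…,I}` containing `i` (0-based indices):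
an element `t > i` belongs to `A_k^i` iff the binary digit of `k` in position `I - 1 - t`
vanishes. -/
def Aset {I : ℕ} (i : Fin I) (k : ℕ) : Finset (Fin I) :=
  Finset.univ.filter (fun t => t = i ∨ (i < t ∧ Nat.testBit k (I - 1 - t.val) = false))

/-- Partial sums `∑_{ℓ=0}^{k-1} n_{A_ℓ^i}`. -/
def psum {I : ℕ} (i : Fin I) (n : Finset (Fin I) → ℕ) (k : ℕ) : ℕ :=
  ∑ l ∈ Finset.range k, n (Aset i l)

/-- The transition function `f̃` of the detailed chain: a demand `d A` adds `ε_{A^{(n)}}`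
where `A^{(n)} = {i ∈ A : ψ(n)_i < C_i}` (no change if `A^{(n)} = ∅`); a service `r_j^i`
removes `ε_{A_k^i}` for the minimal `k` with `∑_{ℓ=0}^{k} n_{A_ℓ^i} ≥ j`, if
`∑_{ℓ} n_{A_ℓ^i} ≥ j`, and otherwise does nothing. -/
noncomputable def ftil {I : ℕ} (C : Fin I → ℕ) (n : Finset (Fin I) → ℕ) :
    Ev I → (Finset (Fin I) → ℕ)
  | .d A => fun B =>
      n B + if B = A.filter (fun i => psi n i < C i) ∧ B.Nonempty then 1 else 0
  | .s i j => fun B =>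
      n B - if j ≤ psum i n (2 ^ (I - 1 - i.val))
              ∧ B = Aset i (sInf {k | j ≤ psum i n (k + 1)}) then 1 else 0

/-- The supremum chain `f̄` on `X` (componentwise supremum over all detailed states
projecting to `x`). -/
noncomputable def fbar {I : ℕ} (C : Fin I → ℕ) (x : Fin I → ℕ) (a : Ev I) : Fin I → ℕ :=
  fun p => sSup ((fun n => psi (ftil C n a) p) '' {n | n ∈ Nspace C ∧ psi n = x})

/-- The infimum chain `f_inf` on `X` (componentwise infimum over all detailed states
projecting to `x`). -/
noncomputable def finf {I : ℕ} (C : Fin I → ℕ) (x : Fin I → ℕ) (a : Ev I) : Fin I → ℕ :=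
  fun p => sInf ((fun n => psi (ftil C n a) p) '' {n | n ∈ Nspace C ∧ psi n = x})

/-- One step of the aggregated envelope chain `F([m,M],a)`. -/
noncomputable def Fenv {I : ℕ} (C : Fin I → ℕ) (m M : Fin I → ℕ) (a : Ev I) :
    (Fin I → ℕ) × (Fin I → ℕ) :=
  (fun p => sInf ((fun x => finf C x a p) '' Set.Icc m M),
   fun p => sSup ((fun x => fbar C x a p) '' Set.Icc m M))

/-- Iteration of the aggregated envelope chain along a word (head applied first). -/
noncomputable def FenvIter {I : ℕ} (C : Fin I → ℕ) :
    (Fin I → ℕ) → (Fin I → ℕ) → List (Ev I) → (Fin I → ℕ) × (Fin I → ℕ)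
  | m, M, [] => (m, M)
  | m, M, a :: w => FenvIter C (Fenv C m M a).1 (Fenv C m M a).2 w

/-- Iterated application of a transition function along a word (head applied first). -/
def iter {I : ℕ} {σ : Type*} (f : σ → Ev I → σ) : σ → List (Ev I) → σ
  | x, [] => x
  | x, a :: w => iter f (f x a) w

/-- The backward word `u_t u_{t-1} ⋯ u_1` (with `u_t` applied first). -/
def bword {I : ℕ} (ω : ℕ → Ev I) (t : ℕ) : List (Ev I) :=
  ((List.range t).reverse).map fun s => ω (s + 1)

/-- The forward word `u_1 u_2 ⋯ u_t` (with `u_1` applied first). -/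
def fword {I : ℕ} (ω : ℕ → Ev I) (t : ℕ) : List (Ev I) :=
  (List.range t).map fun s => ω (s + 1)

/-- The "hat" operation `x̂_i = max{x_i − (x_1 + ⋯ + x_{i-1}), 0}`. -/
def xhat {I : ℕ} (x : Fin I → ℕ) (i : Fin I) : ℕ :=
  x i - ∑ t ∈ Finset.univ.filter (fun t => t < i), x t

/-- The distribution `ν` on events: `ν (d A) = λ_A / Λ` and `ν (r_j^i) = μ / Λ`. -/
noncomputable def probJ {I : ℕ} (C : Fin I → ℕ) (lam : Finset (Fin I) → ℝ) (μv Λ : ℝ) :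
    Ev I → ℝ≥0∞
  | .d A => if A.Nonempty then ENNReal.ofReal (lam A / Λ) else 0
  | .s i j => if 1 ≤ j ∧ j ≤ C i then ENNReal.ofReal (μv / Λ) else 0

section Comb

variable {I : ℕ} {C : Fin I → ℕ}

/-- canonical detailed state supported on singletons -/
def nsing (x : Fin I → ℕ) : Finset (Fin I) → ℕ :=
  fun A => ∑ j, if A = ({j} : Finset (Fin I)) then x j else 0

lemma psi_nsing (x : Fin I → ℕ) : psi (nsing x) = x := by
  funext i
  unfold psi nsing
  rw [Finset.sum_comm]
  have : ∀ j : Fin I, (∑ A ∈ Finset.univ.filter (fun A => i ∈ A), if A = ({j} : Finset (Fin I)) then x j else 0)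
      = if i = j then x j else 0 := by
    intro j
    rw [Finset.sum_ite_eq' (Finset.univ.filter (fun A => i ∈ A)) ({j} : Finset (Fin I))
      (fun _ => x j)]
    simp
  simp [this]

lemma nsing_mem (x : Fin I → ℕ) (hx : ∀ i, x i ≤ C i) : nsing x ∈ Nspace C := by
  constructor
  · unfold nsing
    apply Finset.sum_eq_zero
    intro j _
    simp [(Finset.singleton_ne_empty j).symm]
  · intro i
    have := psi_nsing (I := I) x
    have h2 : psi (nsing x) i = x i := by rw [this]
    unfold psi at h2
    rw [h2]; exact hx i

lemma fiber_nonempty {x : Fin I → ℕ} (hx : ∀ i, x i ≤ C i) :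
    {n | n ∈ Nspace C ∧ psi n = x}.Nonempty :=
  ⟨nsing x, nsing_mem x hx, psi_nsing x⟩

lemma fbar_le {x : Fin I → ℕ} (hx : ∀ i, x i ≤ C i) {a : Ev I} {p : Fin I} {m : ℕ}
    (h : ∀ n, n ∈ Nspace C → psi n = x → psi (ftil C n a) p ≤ m) :
    fbar C x a p ≤ m := by
  apply csSup_le
  · exact (fiber_nonempty hx).image _
  · rintro b ⟨n, ⟨hn, hpsi⟩, rfl⟩
    exact h n hn hpsi

lemma psi_ftil_d (x : Fin I → ℕ) (A : Finset (Fin I)) (n : Finset (Fin I) → ℕ)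
    (hpsi : psi n = x) (p : Fin I) :
    psi (ftil C n (.d A)) p
      = x p + if p ∈ A ∧ x p < C p ∧ (A.filter fun i => x i < C i).Nonempty then 1 else 0 := by
  classical
  have hfil : (A.filter fun i => psi n i < C i) = (A.filter fun i => x i < C i) := by
    rw [hpsi]
  show (∑ S ∈ Finset.univ.filter (fun S => p ∈ S),
      (n S + if S = A.filter (fun i => psi n i < C i) ∧ S.Nonempty then 1 else 0)) = _
  rw [Finset.sum_add_distrib]
  have h1 : (∑ S ∈ Finset.univ.filter (fun S => p ∈ S), n S) = x p := by
    rw [← hpsi]; rfl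
  rw [h1, hfil]
  congr 1
  set B := A.filter fun i => x i < C i with hB
  by_cases hBne : B.Nonempty
  · have : ∀ S : Finset (Fin I), (S = B ∧ S.Nonempty) = (S = B) := by
      intro S
      ext
      exact ⟨fun h => h.1, fun h => ⟨h, h ▸ hBne⟩⟩
    simp only [this]
    rw [Finset.sum_ite_eq' (Finset.univ.filter (fun S => p ∈ S)) B (fun _ => 1)]
    have hmem : B ∈ Finset.univ.filter (fun S => p ∈ S) ↔ (p ∈ A ∧ x p < C p) := by
      simp [hB, Finset.mem_filter]
    by_cases hp : p ∈ A ∧ x p < C p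
    · simp [hmem.2 hp, hp, hBne]
    · have : B ∉ Finset.univ.filter (fun S => p ∈ S) := fun hc => hp (hmem.1 hc)
      simp only [this, if_false]
      have : ¬(p ∈ A ∧ x p < C p ∧ B.Nonempty) := by
        intro ⟨h1, h2, _⟩; exact hp ⟨h1, h2⟩
      simp [this]
  · have h0 : ∀ S ∈ Finset.univ.filter (fun S => p ∈ S),
        (if S = B ∧ S.Nonempty then (1:ℕ) else 0) = 0 := by
      intro S _
      have : ¬(S = B ∧ S.Nonempty) := by
        rintro ⟨rfl, hne⟩; exact hBne hne
      simp [this]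
    rw [Finset.sum_congr rfl h0]
    have : ¬(p ∈ A ∧ x p < C p ∧ B.Nonempty) := by
      rintro ⟨_, _, hne⟩; exact hBne hne
    simp [this]

lemma fbar_d_le (x : Fin I → ℕ) (hx : ∀ i, x i ≤ C i) (A : Finset (Fin I)) (p : Fin I) :
    fbar C x (.d A) p ≤ x p + if p ∈ A ∧ x p < C p then 1 else 0 := by
  apply fbar_le hx
  intro n _ hpsi
  rw [psi_ftil_d x A n hpsi p]
  gcongr
  by_cases h : p ∈ A ∧ x p < C p ∧ (A.filter fun i => x i < C i).Nonempty
  · simp [h, h.1, h.2.1]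
  · simp [h]

lemma fbar_d_mem (x : Fin I → ℕ) (hx : ∀ i, x i ≤ C i) (A : Finset (Fin I)) (p : Fin I) :
    fbar C x (.d A) p ≤ C p := by
  refine (fbar_d_le x hx A p).trans ?_
  by_cases h : p ∈ A ∧ x p < C p
  · simp only [h, and_self, if_true]
    omega
  · simp only [h, if_false]
    exact (hx p).trans (by omega)

lemma psi_ftil_s_le (n : Finset (Fin I) → ℕ) (i : Fin I) (j : ℕ) (p : Fin I) :
    psi (ftil C n (.s i j)) p ≤ psi n p := by
  apply Finset.sum_le_sum
  intro S _
  exact Nat.sub_le _ _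

lemma fbar_s_le (x : Fin I → ℕ) (hx : ∀ i, x i ≤ C i) (i : Fin I) (j : ℕ) (p : Fin I) :
    fbar C x (.s i j) p ≤ x p := by
  apply fbar_le hx
  intro n _ hpsi
  calc psi (ftil C n (.s i j)) p ≤ psi n p := psi_ftil_s_le n i j p
    _ = x p := by rw [hpsi]

end Comb

section Enum

variable {I : ℕ} {C : Fin I → ℕ}

lemma mem_Aset {i t : Fin I} {l : ℕ} :
    t ∈ Aset i l ↔ (t = i ∨ (i < t ∧ Nat.testBit l (I - 1 - t.val) = false)) := by
  simp [Aset]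

lemma mem_Aset_self (i : Fin I) (l : ℕ) : i ∈ Aset i l := mem_Aset.2 (Or.inl rfl)

/-- sum of a set of bits -/
def sumBits (g : ℕ → Bool) (k : ℕ) : ℕ := ∑ b ∈ Finset.range k, if g b then 2^b else 0

lemma sumBits_lt (g : ℕ → Bool) (k : ℕ) : sumBits g k < 2^k := by
  induction k with
  | zero => simp [sumBits]
  | succ k ih =>
    have h : sumBits g (k+1) = sumBits g k + (if g k then 2^k else 0) :=
      Finset.sum_range_succ _ _
    have hle : (if g k then 2^k else 0) ≤ 2^k := by split <;> simp
    rw [h, pow_succ]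
    omega

lemma sumBits_testBit (g : ℕ → Bool) (k b : ℕ) :
    (sumBits g k).testBit b = (decide (b < k) && g b) := by
  induction k with
  | zero => simp [sumBits]
  | succ k ih =>
    have hs : sumBits g (k+1) = (if g k then 2^k else 0) + sumBits g k := by
      rw [sumBits, Finset.sum_range_succ, add_comm]; rfl
    by_cases hg : g k
    · rw [hs, if_pos hg]
      rcases lt_trichotomy b k with hb | rfl | hb
      · rw [Nat.testBit_two_pow_add_gt hb, ih]
        simp [hb, Nat.lt_succ_of_lt hb]
      · rw [Nat.testBit_two_pow_add_eq]
        have : (sumBits g b).testBit b = false :=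
          Nat.testBit_lt_two_pow (sumBits_lt g b)
        simp [this, hg]
      · have hlt : 2^k + sumBits g k < 2^b := by
          have h1 : sumBits g k < 2^k := sumBits_lt g k
          have h2 : 2^(k+1) ≤ 2^b := Nat.pow_le_pow_right (by norm_num) hb
          have h3 : 2^(k+1) = 2^k + 2^k := by rw [pow_succ]; omega
          omega
        rw [Nat.testBit_lt_two_pow hlt]
        have : ¬ (b < k + 1) := by omega
        simp [this]
    · rw [hs, if_neg hg, zero_add, ih]
      by_cases hb : b = k
      · subst hb
        simp [hg]
      · by_cases hbk : b < k
        · simp [hbk, Nat.lt_succ_of_lt hbk]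
        · have h1 : ¬ (b < k) := hbk
          have h2 : ¬ (b < k + 1) := by omega
          simp [h1, h2]

/-- The sets `Aset i l`, `l < 2^(I-1-i)`, enumerate exactly the subsets of `{i,…,I-1}`
containing `i`. -/
lemma psum_total (i : Fin I) (n : Finset (Fin I) → ℕ) :
    psum i n (2 ^ (I - 1 - i.val))
      = ∑ A ∈ Finset.univ.filter (fun A => i ∈ A ∧ ∀ t ∈ A, i ≤ t), n A := by
  have hI : 0 < I := i.pos
  have hiI : i.val < I := i.isLt
  set k := I - 1 - i.val with hk
  unfold psum
  refine Finset.sum_nbij' (i := fun l => Aset i l)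
    (j := fun A => sumBits (fun b => !(decide ((⟨I - 1 - b, by omega⟩ : Fin I) ∈ A))) k)
    ?_ ?_ ?_ ?_ ?_
  · intro l _
    simp only [Finset.mem_filter, Finset.mem_univ, true_and]
    refine ⟨mem_Aset_self i l, ?_⟩
    intro t ht
    rcases mem_Aset.1 ht with rfl | ⟨h, _⟩
    · exact le_refl _
    · exact le_of_lt h
  · intro A _
    simp only [Finset.mem_range]
    exact sumBits_lt _ k
  · intro l hl
    simp only [Finset.mem_range] at hl
    apply Nat.eq_of_testBit_eq
    intro b
    rw [sumBits_testBit]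
    by_cases hb : b < k
    · have h1 : ¬ ((⟨I - 1 - b, by omega⟩ : Fin I) = i) := by
        intro hc
        have := congrArg Fin.val hc
        simp at this
        omega
      have h2 : i < (⟨I - 1 - b, by omega⟩ : Fin I) := by
        show i.val < I - 1 - b
        omega
      have h3 : I - 1 - (I - 1 - b) = b := by omega
      by_cases htb : Nat.testBit l b
      · have : (⟨I - 1 - b, by omega⟩ : Fin I) ∉ Aset i l := by
          intro hc
          rcases mem_Aset.1 hc with hc1 | ⟨_, hc2⟩
          · exact h1 hc1
          · rw [h3] at hc2; simp [htb] at hc2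
        simp [hb, this, htb]
      · have : (⟨I - 1 - b, by omega⟩ : Fin I) ∈ Aset i l := by
          apply mem_Aset.2
          right
          refine ⟨h2, ?_⟩
          rw [h3]
          exact Bool.eq_false_iff.2 htb
        simp [hb, this, htb]
    · have hlb : Nat.testBit l b = false := by
        apply Nat.testBit_lt_two_pow
        calc l < 2^k := hl
          _ ≤ 2^b := Nat.pow_le_pow_right (by norm_num) (by omega)
      simp [hb, hlb]
  · intro A hA
    simp only [Finset.mem_filter, Finset.mem_univ, true_and] at hA
    obtain ⟨hiA, hge⟩ := hA
    ext t
    rw [mem_Aset]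
    by_cases hti : t = i
    · subst hti; simp [hiA]
    · have hit : ¬ (t < i) ∨ t ∈ A → True := fun _ => trivial
      by_cases hlt : i < t
      · have htI : t.val < I := t.isLt
        have hpos : I - 1 - t.val < k := by
          have : i.val < t.val := hlt
          omega
        rw [sumBits_testBit]
        have helem : (⟨I - 1 - (I - 1 - t.val), by omega⟩ : Fin I) = t := by
          apply Fin.ext
          show I - 1 - (I - 1 - t.val) = t.val
          omega
        by_cases htA : t ∈ A
        · have : (!(decide ((⟨I - 1 - (I - 1 - t.val), by omega⟩ : Fin I) ∈ A))) = false := by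
            rw [helem]; simp [htA]
          simp [hpos, this, hlt, htA, hti]
        · have : (!(decide ((⟨I - 1 - (I - 1 - t.val), by omega⟩ : Fin I) ∈ A))) = true := by
            rw [helem]; simp [htA]
          simp [hpos, this, hti, htA]
      · have : t ∉ A := fun hc => hlt (lt_of_le_of_ne (hge t hc) (Ne.symm hti))
        constructor
        · rintro (hc | ⟨hc, _⟩)
          · exact absurd hc hti
          · exact absurd hc hlt
        · intro hc
          exact absurd hc this
  · intro l _
    rfl

end Enum

section Serv

variable {I : ℕ} {C : Fin I → ℕ}

lemma x_le_total (i : Fin I) (n : Finset (Fin I) → ℕ) (x : Fin I → ℕ) (hpsi : psi n = x) :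
    x i ≤ psum i n (2 ^ (I - 1 - i.val)) + ∑ t ∈ Finset.univ.filter (fun t => t < i), x t := by
  classical
  rw [psum_total]
  have hxi : x i = ∑ A ∈ Finset.univ.filter (fun A => i ∈ A), n A := by
    rw [← hpsi]; rfl
  have hsplit :
      (∑ A ∈ Finset.univ.filter (fun A => i ∈ A), n A)
        = (∑ A ∈ (Finset.univ.filter (fun A => i ∈ A)).filter (fun A => ∀ t ∈ A, i ≤ t), n A)
          + ∑ A ∈ (Finset.univ.filter (fun A => i ∈ A)).filter (fun A => ¬ ∀ t ∈ A, i ≤ t), n A :=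
    (Finset.sum_filter_add_sum_filter_not _ _ _).symm
  have hfil : (Finset.univ.filter (fun A => i ∈ A)).filter (fun A => ∀ t ∈ A, i ≤ t)
      = (Finset.univ : Finset (Finset (Fin I))).filter (fun A => i ∈ A ∧ ∀ t ∈ A, i ≤ t) := by
    ext A
    simp [Finset.mem_filter]
  have hbad : (∑ A ∈ (Finset.univ.filter (fun A => i ∈ A)).filter (fun A => ¬ ∀ t ∈ A, i ≤ t), n A)
      ≤ ∑ t ∈ Finset.univ.filter (fun t => t < i), x t := by
    have hxt : ∀ t : Fin I, x t = ∑ A ∈ Finset.univ, if t ∈ A then n A else 0 := by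
      intro t
      rw [← Finset.sum_filter]
      rw [← hpsi]; rfl
    calc (∑ A ∈ (Finset.univ.filter (fun A => i ∈ A)).filter (fun A => ¬ ∀ t ∈ A, i ≤ t), n A)
        ≤ ∑ A ∈ (Finset.univ.filter (fun A => i ∈ A)).filter (fun A => ¬ ∀ t ∈ A, i ≤ t),
            ∑ t ∈ Finset.univ.filter (fun t => t < i), (if t ∈ A then n A else 0) := by
          apply Finset.sum_le_sum
          intro A hA
          simp only [Finset.mem_filter, Finset.mem_univ, true_and] at hA
          obtain ⟨_, hbad⟩ := hA
          push_neg at hbad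
          obtain ⟨t0, ht0A, ht0lt⟩ := hbad
          have ht0 : t0 ∈ Finset.univ.filter (fun t => t < i) := by
            simp [Finset.mem_filter, ht0lt]
          calc n A = (if t0 ∈ A then n A else 0) := by simp [ht0A]
            _ ≤ ∑ t ∈ Finset.univ.filter (fun t => t < i), (if t ∈ A then n A else 0) :=
              Finset.single_le_sum (f := fun t => if t ∈ A then n A else 0)
                (fun _ _ => Nat.zero_le _) ht0
      _ ≤ ∑ A ∈ Finset.univ,
            ∑ t ∈ Finset.univ.filter (fun t => t < i), (if t ∈ A then n A else 0) := by
          apply Finset.sum_le_sum_of_subset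
          intro A hA
          exact Finset.mem_univ A
      _ = ∑ t ∈ Finset.univ.filter (fun t => t < i), x t := by
          rw [Finset.sum_comm]
          exact Finset.sum_congr rfl (fun t _ => (hxt t).symm)
  rw [hfil] at hsplit
  omega

lemma psi_ftil_s_hit (x : Fin I → ℕ) (i : Fin I) (j : ℕ) (hj1 : 1 ≤ j) (hjx : j ≤ xhat x i)
    (n : Finset (Fin I) → ℕ) (hpsi : psi n = x) :
    psi (ftil C n (.s i j)) i + 1 = x i := by
  classical
  set slt := ∑ t ∈ Finset.univ.filter (fun t => t < i), x t with hslt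
  have hxh : xhat x i = x i - slt := rfl
  have hxs : slt + j ≤ x i := by
    rw [hxh] at hjx
    omega
  have htot : j ≤ psum i n (2 ^ (I - 1 - i.val)) := by
    have := x_le_total i n x hpsi
    omega
  set S := {k | j ≤ psum i n (k + 1)} with hS
  have hSne : S.Nonempty := by
    refine ⟨2 ^ (I - 1 - i.val) - 1, ?_⟩
    show j ≤ psum i n (2 ^ (I - 1 - i.val) - 1 + 1)
    have h1 : (1:ℕ) ≤ 2 ^ (I - 1 - i.val) := Nat.one_le_two_pow
    rw [Nat.sub_add_cancel h1]
    exact htot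
  set k0 := sInf S with hk0
  have hk0S : j ≤ psum i n (k0 + 1) := Nat.sInf_mem hSne
  have hk0lt : psum i n k0 < j := by
    rcases Nat.eq_zero_or_pos k0 with h0 | h0
    · rw [h0]
      show psum i n 0 < j
      simp [psum]
      omega
    · have : k0 - 1 ∉ S := Nat.notMem_of_lt_sInf (by omega)
      simp only [hS, Set.mem_setOf_eq, not_le] at this
      have he : k0 - 1 + 1 = k0 := by omega
      rw [he] at this
      exact this
  have hstep : psum i n (k0 + 1) = psum i n k0 + n (Aset i k0) := Finset.sum_range_succ _ _
  have hnpos : 1 ≤ n (Aset i k0) := by omega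
  have hcond : j ≤ psum i n (2 ^ (I - 1 - i.val)) ∧ True := ⟨htot, trivial⟩
  show (∑ B ∈ Finset.univ.filter (fun B => i ∈ B),
      (n B - if j ≤ psum i n (2 ^ (I - 1 - i.val))
              ∧ B = Aset i (sInf {k | j ≤ psum i n (k + 1)}) then 1 else 0)) + 1 = x i
  have hsub : ∀ B ∈ Finset.univ.filter (fun B => i ∈ B),
      (if j ≤ psum i n (2 ^ (I - 1 - i.val))
          ∧ B = Aset i (sInf {k | j ≤ psum i n (k + 1)}) then 1 else 0) ≤ n B := by
    intro B _
    split
    · next h =>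
        rw [h.2]
        exact hnpos
    · omega
  have key : (∑ B ∈ Finset.univ.filter (fun B => i ∈ B),
      (n B - if j ≤ psum i n (2 ^ (I - 1 - i.val))
              ∧ B = Aset i (sInf {k | j ≤ psum i n (k + 1)}) then 1 else 0))
      + (∑ B ∈ Finset.univ.filter (fun B => i ∈ B),
      (if j ≤ psum i n (2 ^ (I - 1 - i.val))
              ∧ B = Aset i (sInf {k | j ≤ psum i n (k + 1)}) then 1 else 0))
      = ∑ B ∈ Finset.univ.filter (fun B => i ∈ B), n B := by
    rw [← Finset.sum_add_distrib]
    apply Finset.sum_congr rfl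
    intro B hB
    have := hsub B hB
    omega
  have hone : (∑ B ∈ Finset.univ.filter (fun B => i ∈ B),
      (if j ≤ psum i n (2 ^ (I - 1 - i.val))
              ∧ B = Aset i (sInf {k | j ≤ psum i n (k + 1)}) then 1 else 0)) = 1 := by
    have : ∀ B : Finset (Fin I), (j ≤ psum i n (2 ^ (I - 1 - i.val))
              ∧ B = Aset i (sInf {k | j ≤ psum i n (k + 1)}))
        = (B = Aset i (sInf {k | j ≤ psum i n (k + 1)})) := by
      intro B
      ext
      exact ⟨fun h => h.2, fun h => ⟨htot, h⟩⟩
    simp only [this]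
    rw [Finset.sum_ite_eq' (Finset.univ.filter (fun B => i ∈ B))
      (Aset i (sInf {k | j ≤ psum i n (k + 1)})) (fun _ => 1)]
    have : Aset i (sInf {k | j ≤ psum i n (k + 1)}) ∈ Finset.univ.filter (fun B => i ∈ B) := by
      simp [mem_Aset_self]
    simp [this]
  have hxi : (∑ B ∈ Finset.univ.filter (fun B => i ∈ B), n B) = x i := by
    rw [← hpsi]; rfl
  omega

lemma fbar_s_hit (x : Fin I → ℕ) (hx : ∀ i, x i ≤ C i) (i : Fin I) (j : ℕ)
    (hj1 : 1 ≤ j) (hjx : j ≤ xhat x i) :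
    fbar C x (.s i j) i + 1 ≤ x i := by
  have hx1 : 1 ≤ x i := by
    have : xhat x i ≤ x i := Nat.sub_le _ _
    omega
  have : fbar C x (.s i j) i ≤ x i - 1 := by
    apply fbar_le hx
    intro n _ hpsi
    have := psi_ftil_s_hit (C := C) x i j hj1 hjx n hpsi
    omega
  omega

end Serv

section Prob

instance (I : ℕ) : Countable (Ev I) := by
  have hinj : Function.Injective (fun e : Ev I =>
      match e with
      | .d A => (Sum.inl A : Finset (Fin I) ⊕ (Fin I × ℕ))
      | .s i j => Sum.inr (i, j)) := by
    intro a b h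
    cases a <;> cases b <;> simp_all
  exact hinj.countable

variable {I : ℕ}

lemma measurableSet_ev (S : Set (Ev I)) : MeasurableSet S :=
  MeasurableSpace.measurableSet_top

lemma measurableSet_pi_ev {k : ℕ} (S : Set (Fin k → Ev I)) : MeasurableSet S := by
  have h1 : ∀ v : Fin k → Ev I, MeasurableSet ({v} : Set (Fin k → Ev I)) := by
    intro v
    have : ({v} : Set (Fin k → Ev I)) = ⋂ s, (fun w : Fin k → Ev I => w s) ⁻¹' {v s} := by
      ext w; simp [funext_iff]
    rw [this]
    exact MeasurableSet.iInter fun s => (measurable_pi_apply s) (measurableSet_ev _)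
  have h2 : S = ⋃ v ∈ S, {v} := by simp
  rw [h2]
  exact MeasurableSet.biUnion S.to_countable (fun v _ => h1 v)

lemma measurable_word (k : ℕ) :
    Measurable (fun ω : ℕ → Ev I => (fun s : Fin k => ω (s.val + 1))) :=
  measurable_pi_lambda _ (fun s => measurable_pi_apply _)

/-- the cylinder set prescribing `ω 1, …, ω k` -/
def cyl (k : ℕ) (v : Fin k → Ev I) : Set (ℕ → Ev I) := {ω | ∀ s : Fin k, ω (s.val + 1) = v s}

lemma measurableSet_cyl {k : ℕ} (v : Fin k → Ev I) : MeasurableSet (cyl k v) := by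
  have : cyl k v = (fun ω : ℕ → Ev I => (fun s : Fin k => ω (s.val + 1))) ⁻¹' {v} := by
    ext ω; simp [cyl, funext_iff]
  rw [this]
  exact measurable_word k (measurableSet_pi_ev _)

variable {C : Fin I → ℕ} {lam : Finset (Fin I) → ℝ} {μv Λ : ℝ}
  {P : Measure (ℕ → Ev I)}

lemma P_cyl
    (hiid : ∀ (T : Finset ℕ) (u : ℕ → Ev I),
        P {ω | ∀ t ∈ T, ω t = u t} = ∏ t ∈ T, probJ C lam μv Λ (u t))
    (k : ℕ) (v : Fin k → Ev I) :
    P (cyl k v) = ∏ s : Fin k, probJ C lam μv Λ (v s) := by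
  classical
  set u : ℕ → Ev I := fun t => match t with
    | 0 => Ev.d ∅
    | r+1 => if h : r < k then v ⟨r, h⟩ else Ev.d ∅ with hu
  set T : Finset ℕ := (Finset.range k).image (· + 1) with hT
  have hset : cyl k v = {ω | ∀ t ∈ T, ω t = u t} := by
    ext ω
    simp only [cyl, Set.mem_setOf_eq, hT, Finset.mem_image, Finset.mem_range]
    constructor
    · rintro h t ⟨r, hr, rfl⟩
      have : u (r+1) = v ⟨r, hr⟩ := by simp [hu, hr]
      rw [this]
      exact h ⟨r, hr⟩
    · intro h s
      have h2 := h (s.val + 1) ⟨s.val, s.isLt, rfl⟩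
      have : u (s.val + 1) = v ⟨s.val, s.isLt⟩ := by simp [hu, s.isLt]
      rw [this] at h2
      simpa using h2
  rw [hset, hiid T u, hT]
  rw [Finset.prod_image (by intro a _ b _ h; simp only at h; omega)]
  rw [← Fin.prod_univ_eq_prod_range (fun r => probJ C lam μv Λ (u (r+1))) k]
  apply Finset.prod_congr rfl
  intro s _
  congr 1
  simp [hu, s.isLt]

/-- fundamental identity: integral of a function of the first `k` steps -/
lemma lint_word
    (hiid : ∀ (T : Finset ℕ) (u : ℕ → Ev I),
        P {ω | ∀ t ∈ T, ω t = u t} = ∏ t ∈ T, probJ C lam μv Λ (u t))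
    (k : ℕ) (G : (Fin k → Ev I) → ℝ≥0∞) :
    ∫⁻ ω, G (fun s : Fin k => ω (s.val + 1)) ∂P
      = ∑' v : Fin k → Ev I, G v * ∏ s : Fin k, probJ C lam μv Λ (v s) := by
  have hpt : ∀ ω : ℕ → Ev I, G (fun s => ω (s.val + 1))
      = ∑' v : Fin k → Ev I, (cyl k v).indicator (fun _ => G v) ω := by
    intro ω
    rw [tsum_eq_single (fun s : Fin k => ω (s.val + 1)) ?_]
    · have hmem : ω ∈ cyl k (fun s : Fin k => ω (s.val + 1)) := fun s => rfl
      rw [Set.indicator_of_mem hmem]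
    · intro v hv
      have hnm : ω ∉ cyl k v := by
        intro hc
        exact hv (funext fun s => (hc s).symm)
      rw [Set.indicator_of_notMem hnm]
  calc ∫⁻ ω, G (fun s => ω (s.val + 1)) ∂P
      = ∫⁻ ω, ∑' v : Fin k → Ev I, (cyl k v).indicator (fun _ => G v) ω ∂P :=
        lintegral_congr hpt
    _ = ∑' v : Fin k → Ev I, ∫⁻ ω, (cyl k v).indicator (fun _ => G v) ω ∂P :=
        lintegral_tsum (fun v => (measurable_const.indicator (measurableSet_cyl v)).aemeasurable)
    _ = ∑' v : Fin k → Ev I, G v * ∏ s : Fin k, probJ C lam μv Λ (v s) := by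
        apply tsum_congr
        intro v
        rw [lintegral_indicator_const (measurableSet_cyl v), P_cyl hiid]

/-- the snoc equivalence -/
def snocEv (I k : ℕ) : ((Fin k → Ev I) × Ev I) ≃ (Fin (k+1) → Ev I) where
  toFun p := Fin.snoc p.1 p.2
  invFun v := (fun s => v s.castSucc, v (Fin.last k))
  left_inv p := by
    ext s
    · simp [Fin.snoc_castSucc]
    · simp [Fin.snoc_last]
  right_inv v := by
    funext s
    induction s using Fin.lastCases with
    | last => simp [Fin.snoc_last]
    | cast s => simp [Fin.snoc_castSucc]

lemma lint_word_succ
    (hiid : ∀ (T : Finset ℕ) (u : ℕ → Ev I),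
        P {ω | ∀ t ∈ T, ω t = u t} = ∏ t ∈ T, probJ C lam μv Λ (u t))
    (k : ℕ) (H : (Fin k → Ev I) → Ev I → ℝ≥0∞) :
    ∫⁻ ω, H (fun s : Fin k => ω (s.val + 1)) (ω (k + 1)) ∂P
      = ∑' w : Fin k → Ev I, (∏ s : Fin k, probJ C lam μv Λ (w s))
          * ∑' e : Ev I, probJ C lam μv Λ e * H w e := by
  have hbase := lint_word hiid (k+1)
    (fun v : Fin (k+1) → Ev I => H (fun s : Fin k => v s.castSucc) (v (Fin.last k)))
  have hLHS : (∫⁻ ω, H (fun s : Fin k => ω (s.val + 1)) (ω (k + 1)) ∂P)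
      = ∫⁻ ω, H (fun s : Fin k => (fun r : Fin (k+1) => ω (r.val + 1)) s.castSucc)
          ((fun r : Fin (k+1) => ω (r.val + 1)) (Fin.last k)) ∂P := by
    apply lintegral_congr
    intro ω
    congr 1
  rw [hLHS, hbase]
  rw [← (snocEv I k).tsum_eq]
  have hsummand : ∀ c : (Fin k → Ev I) × Ev I,
      H (fun s : Fin k => (snocEv I k) c s.castSucc) ((snocEv I k) c (Fin.last k))
          * (∏ s : Fin (k+1), probJ C lam μv Λ ((snocEv I k) c s))
        = (∏ s : Fin k, probJ C lam μv Λ (c.1 s)) * (probJ C lam μv Λ c.2 * H c.1 c.2) := by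
    rintro ⟨w, e⟩
    have h1 : (fun s : Fin k => (snocEv I k) (w, e) s.castSucc) = w := by
      funext s
      simp [snocEv]
    have h2 : (snocEv I k) (w, e) (Fin.last k) = e := by
      simp [snocEv]
    have h3 : (∏ s : Fin (k+1), probJ C lam μv Λ ((snocEv I k) (w, e) s))
        = (∏ s : Fin k, probJ C lam μv Λ (w s)) * probJ C lam μv Λ e := by
      rw [Fin.prod_univ_castSucc]
      have ha : ∀ s : Fin k, (snocEv I k) (w, e) s.castSucc = w s := by
        intro s; simp [snocEv]
      have hb : (snocEv I k) (w, e) (Fin.last k) = e := by simp [snocEv]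
      rw [hb]
      congr 1
      exact Finset.prod_congr rfl (fun s _ => by rw [ha s])
    rw [h1, h2, h3]
    ring
  rw [tsum_congr hsummand]
  rw [ENNReal.tsum_prod' (f := fun c : (Fin k → Ev I) × Ev I =>
    (∏ s : Fin k, probJ C lam μv Λ (c.1 s)) * (probJ C lam μv Λ c.2 * H c.1 c.2))]
  apply tsum_congr
  intro w
  have hcl : (∑' b : Ev I, (∏ s : Fin k, probJ C lam μv Λ ((w, b).1 s))
        * (probJ C lam μv Λ (w, b).2 * H (w, b).1 (w, b).2))
      = ∑' b : Ev I, (∏ s : Fin k, probJ C lam μv Λ (w s)) * (probJ C lam μv Λ b * H w b) :=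
    tsum_congr fun b => rfl
  rw [hcl, ENNReal.tsum_mul_left]

end Prob

section Drift

variable {I : ℕ} {C : Fin I → ℕ}

lemma sum_fbar_d_le (x : Fin I → ℕ) (hx : ∀ i, x i ≤ C i) (A : Finset (Fin I)) :
    (∑ p, fbar C x (.d A) p) ≤ (∑ p, x p) + A.card := by
  classical
  calc (∑ p, fbar C x (.d A) p)
      ≤ ∑ p, (x p + if p ∈ A ∧ x p < C p then 1 else 0) :=
        Finset.sum_le_sum (fun p _ => fbar_d_le x hx A p)
    _ = (∑ p, x p) + ∑ p, (if p ∈ A ∧ x p < C p then 1 else 0) := Finset.sum_add_distrib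
    _ ≤ (∑ p, x p) + A.card := by
        have h2 : (∑ p, if p ∈ A ∧ x p < C p then (1:ℕ) else 0) ≤ A.card := by
          calc (∑ p, if p ∈ A ∧ x p < C p then (1:ℕ) else 0)
              ≤ ∑ p, (if p ∈ A then 1 else 0) := by
                apply Finset.sum_le_sum
                intro p _
                split
                · next hp => simp [hp.1]
                · exact Nat.zero_le _
            _ = A.card := by
                rw [Finset.sum_ite_mem, Finset.univ_inter, Finset.sum_const, smul_eq_mul, mul_one]
        omega

lemma sum_fbar_s_le' (x : Fin I → ℕ) (hx : ∀ i, x i ≤ C i) (i : Fin I) (j : ℕ) :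
    (∑ p, fbar C x (.s i j) p) ≤ ∑ p, x p :=
  Finset.sum_le_sum (fun p _ => fbar_s_le x hx i j p)

lemma sum_fbar_s_hit' (x : Fin I → ℕ) (hx : ∀ i, x i ≤ C i) (i : Fin I) (j : ℕ)
    (hj1 : 1 ≤ j) (hjx : j ≤ xhat x i) :
    (∑ p, fbar C x (.s i j) p) + 1 ≤ ∑ p, x p := by
  classical
  have h1 := fbar_s_hit x hx i j hj1 hjx
  have h2 : (∑ p ∈ Finset.univ.erase i, fbar C x (.s i j) p)
      ≤ ∑ p ∈ Finset.univ.erase i, x p :=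
    Finset.sum_le_sum (fun p _ => fbar_s_le x hx i j p)
  have e1 : (∑ p ∈ Finset.univ.erase i, fbar C x (.s i j) p) + fbar C x (.s i j) i
      = ∑ p, fbar C x (.s i j) p := Finset.sum_erase_add _ _ (Finset.mem_univ i)
  have e2 : (∑ p ∈ Finset.univ.erase i, x p) + x i = ∑ p, x p :=
    Finset.sum_erase_add _ _ (Finset.mem_univ i)
  omega

lemma exists_xhat_pos (x : Fin I → ℕ) (hx0 : x ≠ 0) : ∃ i, 1 ≤ xhat x i := by
  classical
  have hne : (Finset.univ.filter (fun i => x i ≠ 0)).Nonempty := by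
    by_contra h
    apply hx0
    funext i
    simp only [Pi.zero_apply]
    by_contra hxi
    exact h ⟨i, by simp [hxi]⟩
  set i0 := (Finset.univ.filter (fun i => x i ≠ 0)).min' hne with hi0
  refine ⟨i0, ?_⟩
  have hx0i : x i0 ≠ 0 := by
    have := Finset.min'_mem (Finset.univ.filter (fun i => x i ≠ 0)) hne
    rw [← hi0] at this
    exact (Finset.mem_filter.1 this).2
  have hzero : ∀ t : Fin I, t < i0 → x t = 0 := by
    intro t ht
    by_contra hxt
    have h2 : i0 ≤ t := Finset.min'_le _ _ (by simp [hxt])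
    exact absurd ht (not_lt.2 h2)
  have hsum : (∑ t ∈ Finset.univ.filter (fun t => t < i0), x t) = 0 :=
    Finset.sum_eq_zero (fun t ht => hzero t (Finset.mem_filter.1 ht).2)
  unfold xhat
  rw [hsum]
  omega

lemma count_lam {I : ℕ} (lam : Finset (Fin I) → ℝ) (lamI : Fin I → ℝ)
    (hlamI : ∀ i, lamI i = ∑ A ∈ Finset.univ.filter (fun A => i ∈ A), lam A) :
    ∑ A : Finset (Fin I), lam A * A.card = ∑ i, lamI i := by
  classical
  have h1 : ∀ A : Finset (Fin I), lam A * A.card = ∑ i : Fin I, if i ∈ A then lam A else 0 := by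
    intro A
    rw [Finset.sum_ite_mem, Finset.univ_inter, Finset.sum_const, nsmul_eq_mul]
    ring
  rw [Finset.sum_congr rfl (fun A _ => h1 A), Finset.sum_comm]
  apply Finset.sum_congr rfl
  intro i _
  rw [hlamI i, Finset.sum_filter]

/-- the non-negative "extra" increment of arrivals -/
noncomputable def extraEv {I : ℕ} : Ev I → ℝ≥0∞
  | .d A => (A.card : ℝ≥0∞)
  | .s _ _ => 0

lemma drift_step {lam : Finset (Fin I) → ℝ} {μv Λ : ℝ} {lamI : Fin I → ℝ}
    (hC : ∀ i, 1 ≤ C i) (hlamnn : ∀ A, 0 ≤ lam A)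
    (hΛpos : 0 < Λ)
    (hlamI : ∀ i, lamI i = ∑ A ∈ Finset.univ.filter (fun A => i ∈ A), lam A)
    (hs : ∑ i, lamI i < μv)
    (hν1 : ∑' e : Ev I, probJ C lam μv Λ e = 1)
    (x : Fin I → ℕ) (hx : ∀ i, x i ≤ C i) (hx0 : x ≠ 0) :
    (∑' e : Ev I, probJ C lam μv Λ e * ((∑ p, fbar C x e p : ℕ) : ℝ≥0∞))
        + ENNReal.ofReal ((μv - ∑ i, lamI i) / Λ)
      ≤ ((∑ p, x p : ℕ) : ℝ≥0∞) := by
  classical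
  obtain ⟨i0, hi0⟩ := exists_xhat_pos x hx0
  set ν : Ev I → ℝ≥0∞ := probJ C lam μv Λ with hν
  set e0 : Ev I := Ev.s i0 1 with he0
  have hνe0 : ν e0 = ENNReal.ofReal (μv / Λ) := by
    simp [hν, he0, probJ, hC i0]
  set hfun : Ev I → ℝ≥0∞ := fun e => ((∑ p, x p : ℕ) : ℝ≥0∞) + extraEv e with hhfun
  have hSnn : 0 ≤ ∑ i, lamI i := by
    apply Finset.sum_nonneg
    intro i _
    rw [hlamI i]
    exact Finset.sum_nonneg (fun A _ => hlamnn A)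
  -- Step 1
  have key1 : (∑' e : Ev I, ν e * ((∑ p, fbar C x e p : ℕ) : ℝ≥0∞)) + ν e0
      ≤ ∑' e : Ev I, ν e * hfun e := by
    have hrw : (∑' e : Ev I, ν e * ((∑ p, fbar C x e p : ℕ) : ℝ≥0∞)) + ν e0
        = ∑' e : Ev I, (ν e * ((∑ p, fbar C x e p : ℕ) : ℝ≥0∞)
            + if e = e0 then ν e0 else 0) := by
      rw [ENNReal.tsum_add]
      congr 1
      exact (tsum_ite_eq e0 (fun _ => ν e0)).symm
    rw [hrw]
    apply ENNReal.tsum_le_tsum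
    intro e
    by_cases hee : e = e0
    · subst hee
      have hg1 : (∑ p, fbar C x e0 p) + 1 ≤ ∑ p, x p := by
        rw [he0]
        exact sum_fbar_s_hit' x hx i0 1 le_rfl hi0
      have hmul : ν e0 * ((∑ p, fbar C x e0 p : ℕ) : ℝ≥0∞) + ν e0
          = ν e0 * (((∑ p, fbar C x e0 p) + 1 : ℕ) : ℝ≥0∞) := by
        push_cast
        ring
      rw [if_pos rfl, hmul]
      have hh0 : hfun e0 = ((∑ p, x p : ℕ) : ℝ≥0∞) + extraEv e0 := rfl
      have hex0 : extraEv (I := I) e0 = 0 := by rw [he0]; rfl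
      rw [hh0, hex0, add_zero]
      exact mul_le_mul_right (Nat.cast_le.2 hg1) _
    · simp only [if_neg hee, add_zero]
      apply mul_le_mul_right
      cases e with
      | d A =>
        have hh : hfun (.d A) = ((∑ p, x p : ℕ) : ℝ≥0∞) + (A.card : ℝ≥0∞) := rfl
        rw [hh]
        calc ((∑ p, fbar C x (.d A) p : ℕ) : ℝ≥0∞)
            ≤ (((∑ p, x p) + A.card : ℕ) : ℝ≥0∞) := Nat.cast_le.2 (sum_fbar_d_le x hx A)
          _ = ((∑ p, x p : ℕ) : ℝ≥0∞) + (A.card : ℝ≥0∞) := by push_cast; ring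
      | s i j =>
        have hh : hfun (.s i j) = ((∑ p, x p : ℕ) : ℝ≥0∞) + 0 := rfl
        rw [hh, add_zero]
        exact Nat.cast_le.2 (sum_fbar_s_le' x hx i j)
  -- Step 2
  have key2 : (∑' e : Ev I, ν e * hfun e)
      ≤ ((∑ p, x p : ℕ) : ℝ≥0∞) + ENNReal.ofReal ((∑ i, lamI i) / Λ) := by
    have hsplit : ∀ e : Ev I, ν e * hfun e
        = ν e * ((∑ p, x p : ℕ) : ℝ≥0∞) + ν e * extraEv e := by
      intro e
      rw [hhfun]
      ring
    rw [tsum_congr hsplit, ENNReal.tsum_add, ENNReal.tsum_mul_right, hν1, one_mul]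
    gcongr
    -- ∑' ν e * extra e ≤ ofReal (∑ lamI / Λ)
    have hsupp : ∀ e : Ev I, e ∉ (Finset.univ.image (Ev.d (I := I))) → ν e * extraEv e = 0 := by
      intro e he
      cases e with
      | d A => exact absurd (Finset.mem_image_of_mem _ (Finset.mem_univ A)) he
      | s i j => show ν _ * 0 = 0; rw [mul_zero]
    rw [tsum_eq_sum hsupp]
    rw [Finset.sum_image (by intro a _ b _ h; injection h)]
    calc (∑ A : Finset (Fin I), ν (.d A) * extraEv (.d A))
        ≤ ∑ A : Finset (Fin I), ENNReal.ofReal (lam A * A.card / Λ) := by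
          apply Finset.sum_le_sum
          intro A _
          by_cases hA : A.Nonempty
          · have hνA : ν (.d A) = ENNReal.ofReal (lam A / Λ) := by
              simp [hν, probJ, hA]
            have hext : extraEv (I := I) (.d A) = (A.card : ℝ≥0∞) := rfl
            rw [hνA, hext]
            rw [show ((A.card : ℝ≥0∞)) = ENNReal.ofReal (A.card : ℝ) by
              rw [ENNReal.ofReal_natCast]]
            rw [← ENNReal.ofReal_mul (div_nonneg (hlamnn A) hΛpos.le)]
            apply ENNReal.ofReal_le_ofReal
            rw [div_mul_eq_mul_div]
          · have hνA : ν (.d A) = 0 := by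
              simp [hν, probJ, hA]
            rw [hνA, zero_mul]
            exact zero_le
      _ = ENNReal.ofReal (∑ A : Finset (Fin I), lam A * A.card / Λ) := by
          rw [ENNReal.ofReal_sum_of_nonneg]
          intro A _
          have := hlamnn A
          positivity
      _ = ENNReal.ofReal ((∑ i, lamI i) / Λ) := by
          congr 1
          rw [← Finset.sum_div, count_lam lam lamI hlamI]
  -- assembly
  have hδsum : ENNReal.ofReal (μv / Λ)
      = ENNReal.ofReal ((μv - ∑ i, lamI i) / Λ) + ENNReal.ofReal ((∑ i, lamI i) / Λ) := by
    rw [← ENNReal.ofReal_add (div_nonneg (by linarith) hΛpos.le) (div_nonneg hSnn hΛpos.le)]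
    congr 1
    field_simp
    ring
  have hchain : (∑' e : Ev I, ν e * ((∑ p, fbar C x e p : ℕ) : ℝ≥0∞))
      + ENNReal.ofReal ((μv - ∑ i, lamI i) / Λ) + ENNReal.ofReal ((∑ i, lamI i) / Λ)
      ≤ ((∑ p, x p : ℕ) : ℝ≥0∞) + ENNReal.ofReal ((∑ i, lamI i) / Λ) := by
    calc (∑' e : Ev I, ν e * ((∑ p, fbar C x e p : ℕ) : ℝ≥0∞))
          + ENNReal.ofReal ((μv - ∑ i, lamI i) / Λ) + ENNReal.ofReal ((∑ i, lamI i) / Λ)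
        = (∑' e : Ev I, ν e * ((∑ p, fbar C x e p : ℕ) : ℝ≥0∞)) + ENNReal.ofReal (μv / Λ) := by
          rw [add_assoc, ← hδsum]
      _ = (∑' e : Ev I, ν e * ((∑ p, fbar C x e p : ℕ) : ℝ≥0∞)) + ν e0 := by rw [hνe0]
      _ ≤ ∑' e : Ev I, ν e * hfun e := key1
      _ ≤ _ := key2
  exact (ENNReal.add_le_add_iff_right ENNReal.ofReal_ne_top).1 hchain

end Drift

section Words

variable {I : ℕ} {C : Fin I → ℕ}

lemma fbar_mem_Xspace {x : Fin I → ℕ} (hx : ∀ i, x i ≤ C i) (a : Ev I) (p : Fin I) :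
    fbar C x a p ≤ C p := by
  cases a with
  | d A => exact fbar_d_mem x hx A p
  | s i j => exact (fbar_s_le x hx i j p).trans (hx p)

lemma iter_append {σ : Type*} (f : σ → Ev I → σ) (x : σ) (L1 L2 : List (Ev I)) :
    iter f x (L1 ++ L2) = iter f (iter f x L1) L2 := by
  induction L1 generalizing x with
  | nil => rfl
  | cons a L ih =>
      show iter f (f x a) (L ++ L2) = iter f (iter f (f x a) L) L2
      exact ih (f x a)

lemma iter_Xspace (L : List (Ev I)) (x : Fin I → ℕ) (hx : ∀ i, x i ≤ C i) :
    ∀ p, iter (fbar C) x L p ≤ C p := by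
  induction L generalizing x with
  | nil => exact hx
  | cons a L ih =>
      show ∀ p, iter (fbar C) (fbar C x a) L p ≤ C p
      exact ih _ (fun p => fbar_mem_Xspace hx a p)

lemma fword_take (ω : ℕ → Ev I) {s t : ℕ} (h : s ≤ t) :
    (fword ω t).take s = fword ω s := by
  unfold fword
  rw [← List.map_take, List.take_range, min_eq_left h]

lemma fword_eq_ofFn (ω : ℕ → Ev I) (t : ℕ) :
    fword ω t = List.ofFn (fun s : Fin t => ω (s.val + 1)) := by
  rw [List.ofFn_eq_map]
  unfold fword
  rw [← List.map_coe_finRange_eq_range, List.map_map]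
  rfl

lemma ofFn_snoc {k : ℕ} (w : Fin k → Ev I) (e : Ev I) :
    List.ofFn (Fin.snoc w e : Fin (k+1) → Ev I) = List.ofFn w ++ [e] := by
  rw [List.ofFn_succ', List.concat_eq_append]
  congr 1
  · congr 1
    funext s
    simp [Fin.snoc_castSucc]
  · simp [Fin.snoc_last]

/-- word-level total content after `k` steps -/
noncomputable def gw (C : Fin I → ℕ) {k : ℕ} (w : Fin k → Ev I) : ℝ≥0∞ :=
  ((∑ p, iter (fbar C) C (List.ofFn w) p : ℕ) : ℝ≥0∞)

open Classical in
/-- word-level indicator that `0` has not been hit yet -/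
noncomputable def chi (C : Fin I → ℕ) {k : ℕ} (w : Fin k → Ev I) : ℝ≥0∞ :=
  if ∀ s ≤ k, iter (fbar C) C ((List.ofFn w).take s) ≠ 0 then 1 else 0

lemma gw_snoc {k : ℕ} (w : Fin k → Ev I) (e : Ev I) :
    gw C (Fin.snoc w e : Fin (k+1) → Ev I)
      = ((∑ p, fbar C (iter (fbar C) C (List.ofFn w)) e p : ℕ) : ℝ≥0∞) := by
  unfold gw
  rw [ofFn_snoc, iter_append]
  rfl

lemma chi_snoc_le {k : ℕ} (w : Fin k → Ev I) (e : Ev I) :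
    chi C (Fin.snoc w e : Fin (k+1) → Ev I) ≤ chi C w := by
  unfold chi
  split
  · next hcond =>
      have h : (∀ s ≤ k, iter (fbar C) C ((List.ofFn w).take s) ≠ 0) := by
        intro s hs
        have h2 := hcond s (by omega)
        rw [ofFn_snoc, List.take_append_of_le_length (by rw [List.length_ofFn]; exact hs)] at h2
        exact h2
      rw [if_pos h]
  · exact zero_le

lemma mem_At_iff (C : Fin I → ℕ) (t : ℕ) (ω : ℕ → Ev I) :
    (∀ s ≤ t, iter (fbar C) C (fword ω s) ≠ 0)
      ↔ (∀ s ≤ t, iter (fbar C) C ((List.ofFn (fun r : Fin t => ω (r.val + 1))).take s) ≠ 0) := by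
  have h : ∀ s, s ≤ t → (List.ofFn (fun r : Fin t => ω (r.val + 1))).take s = fword ω s := by
    intro s hs
    rw [← fword_eq_ofFn, fword_take ω hs]
  constructor
  · intro H s hs; rw [h s hs]; exact H s hs
  · intro H s hs; have h2 := H s hs; rwa [h s hs] at h2

variable {lam : Finset (Fin I) → ℝ} {μv Λ : ℝ} {P : Measure (ℕ → Ev I)}

lemma prod_probJ_snoc (k : ℕ) (w : Fin k → Ev I) (e : Ev I) :
    (∏ s : Fin (k+1), probJ C lam μv Λ ((Fin.snoc w e : Fin (k+1) → Ev I) s))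
      = (∏ s : Fin k, probJ C lam μv Λ (w s)) * probJ C lam μv Λ e := by
  rw [Fin.prod_univ_castSucc]
  have hb : (Fin.snoc w e : Fin (k+1) → Ev I) (Fin.last k) = e := by simp
  rw [hb]
  congr 1
  exact Finset.prod_congr rfl (fun s _ => by rw [Fin.snoc_castSucc])

lemma P_At
    (hiid : ∀ (T : Finset ℕ) (u : ℕ → Ev I),
        P {ω | ∀ t ∈ T, ω t = u t} = ∏ t ∈ T, probJ C lam μv Λ (u t))
    (t : ℕ) :
    P {ω : ℕ → Ev I | ∀ s ≤ t, iter (fbar C) C (fword ω s) ≠ 0}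
      = ∑' w : Fin t → Ev I, chi C w * ∏ s : Fin t, probJ C lam μv Λ (w s) := by
  have hset : {ω : ℕ → Ev I | ∀ s ≤ t, iter (fbar C) C (fword ω s) ≠ 0}
      = (fun ω : ℕ → Ev I => (fun r : Fin t => ω (r.val + 1))) ⁻¹'
          {w : Fin t → Ev I | ∀ s ≤ t, iter (fbar C) C ((List.ofFn w).take s) ≠ 0} := by
    ext ω
    exact mem_At_iff C t ω
  have hmeas : MeasurableSet {ω : ℕ → Ev I | ∀ s ≤ t, iter (fbar C) C (fword ω s) ≠ 0} := by
    rw [hset]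
    exact measurable_word t (measurableSet_pi_ev _)
  have hind : ∀ ω : ℕ → Ev I,
      ({ω : ℕ → Ev I | ∀ s ≤ t, iter (fbar C) C (fword ω s) ≠ 0}).indicator
          (fun _ => (1:ℝ≥0∞)) ω
        = chi C (fun r : Fin t => ω (r.val + 1)) := by
    intro ω
    unfold chi
    by_cases hω : ∀ s ≤ t, iter (fbar C) C (fword ω s) ≠ 0
    · rw [Set.indicator_of_mem (show ω ∈ {ω : ℕ → Ev I | ∀ s ≤ t,
          iter (fbar C) C (fword ω s) ≠ 0} from hω),
        if_pos ((mem_At_iff C t ω).1 hω)]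
    · rw [Set.indicator_of_notMem (show ω ∉ {ω : ℕ → Ev I | ∀ s ≤ t,
          iter (fbar C) C (fword ω s) ≠ 0} from hω),
        if_neg (fun hc => hω ((mem_At_iff C t ω).2 hc))]
  calc P {ω : ℕ → Ev I | ∀ s ≤ t, iter (fbar C) C (fword ω s) ≠ 0}
      = ∫⁻ ω, ({ω : ℕ → Ev I | ∀ s ≤ t, iter (fbar C) C (fword ω s) ≠ 0}).indicator
          (fun _ => (1:ℝ≥0∞)) ω ∂P := (lintegral_indicator_one hmeas).symm
    _ = ∫⁻ ω, chi C (fun r : Fin t => ω (r.val + 1)) ∂P := lintegral_congr hind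
    _ = _ := lint_word hiid t (chi C)

lemma step_ineq {lamI : Fin I → ℝ}
    (hC : ∀ i, 1 ≤ C i) (hlamnn : ∀ A, 0 ≤ lam A) (hΛpos : 0 < Λ)
    (hlamI : ∀ i, lamI i = ∑ A ∈ Finset.univ.filter (fun A => i ∈ A), lam A)
    (hs : ∑ i, lamI i < μv)
    (hν1 : ∑' e : Ev I, probJ C lam μv Λ e = 1) (t : ℕ) :
    (∑' v : Fin (t+1) → Ev I, chi C v * gw C v * ∏ s : Fin (t+1), probJ C lam μv Λ (v s))
      + ENNReal.ofReal ((μv - ∑ i, lamI i)/Λ)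
        * (∑' w : Fin t → Ev I, chi C w * ∏ s : Fin t, probJ C lam μv Λ (w s))
      ≤ ∑' w : Fin t → Ev I, chi C w * gw C w * ∏ s : Fin t, probJ C lam μv Λ (w s) := by
  classical
  set ν : Ev I → ℝ≥0∞ := probJ C lam μv Λ with hν
  set δE := ENNReal.ofReal ((μv - ∑ i, lamI i)/Λ) with hδE
  -- reindex the (t+1)-sum through snoc
  have h1 : (∑' v : Fin (t+1) → Ev I, chi C v * gw C v * ∏ s : Fin (t+1), ν (v s))
      = ∑' c : (Fin t → Ev I) × Ev I,
          chi C (Fin.snoc c.1 c.2 : Fin (t+1) → Ev I)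
            * gw C (Fin.snoc c.1 c.2 : Fin (t+1) → Ev I)
            * ∏ s : Fin (t+1), ν ((Fin.snoc c.1 c.2 : Fin (t+1) → Ev I) s) := by
    rw [← ((snocEv I t).tsum_eq (f := fun v : Fin (t+1) → Ev I =>
      chi C v * gw C v * ∏ s : Fin (t+1), ν (v s)))]
    exact tsum_congr (fun c => rfl)
  have h2 : (∑' c : (Fin t → Ev I) × Ev I,
          chi C (Fin.snoc c.1 c.2 : Fin (t+1) → Ev I)
            * gw C (Fin.snoc c.1 c.2 : Fin (t+1) → Ev I)
            * ∏ s : Fin (t+1), ν ((Fin.snoc c.1 c.2 : Fin (t+1) → Ev I) s))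
      ≤ ∑' c : (Fin t → Ev I) × Ev I,
          (chi C c.1 * ∏ s : Fin t, ν (c.1 s))
            * (ν c.2 * gw C (Fin.snoc c.1 c.2 : Fin (t+1) → Ev I)) := by
    apply ENNReal.tsum_le_tsum
    rintro ⟨w, e⟩
    rw [prod_probJ_snoc t w e]
    calc chi C (Fin.snoc w e : Fin (t+1) → Ev I) * gw C (Fin.snoc w e : Fin (t+1) → Ev I)
          * ((∏ s : Fin t, ν (w s)) * ν e)
        ≤ chi C w * gw C (Fin.snoc w e : Fin (t+1) → Ev I)
          * ((∏ s : Fin t, ν (w s)) * ν e) := by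
          gcongr
          exact chi_snoc_le w e
      _ = (chi C w * ∏ s : Fin t, ν (w s))
            * (ν e * gw C (Fin.snoc w e : Fin (t+1) → Ev I)) := by ring
  have h3 : (∑' c : (Fin t → Ev I) × Ev I,
          (chi C c.1 * ∏ s : Fin t, ν (c.1 s))
            * (ν c.2 * gw C (Fin.snoc c.1 c.2 : Fin (t+1) → Ev I)))
      = ∑' w : Fin t → Ev I, (chi C w * ∏ s : Fin t, ν (w s))
          * (∑' e : Ev I, ν e * gw C (Fin.snoc w e : Fin (t+1) → Ev I)) := by
    rw [ENNReal.tsum_prod' (f := fun c : (Fin t → Ev I) × Ev I =>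
      (chi C c.1 * ∏ s : Fin t, ν (c.1 s))
        * (ν c.2 * gw C (Fin.snoc c.1 c.2 : Fin (t+1) → Ev I)))]
    apply tsum_congr
    intro w
    have hcl : (∑' b : Ev I, (chi C (w, b).1 * ∏ s : Fin t, ν ((w, b).1 s))
          * (ν (w, b).2 * gw C (Fin.snoc (w, b).1 (w, b).2 : Fin (t+1) → Ev I)))
        = ∑' b : Ev I, (chi C w * ∏ s : Fin t, ν (w s))
          * (ν b * gw C (Fin.snoc w b : Fin (t+1) → Ev I)) := tsum_congr (fun b => rfl)
    rw [hcl, ENNReal.tsum_mul_left]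
  -- per-word drift
  have h4 : ∀ w : Fin t → Ev I,
      (chi C w * ∏ s : Fin t, ν (w s))
          * (∑' e : Ev I, ν e * gw C (Fin.snoc w e : Fin (t+1) → Ev I))
        + (chi C w * ∏ s : Fin t, ν (w s)) * δE
      ≤ chi C w * gw C w * ∏ s : Fin t, ν (w s) := by
    intro w
    by_cases hcond : ∀ s ≤ t, iter (fbar C) C ((List.ofFn w).take s) ≠ 0
    · have hchi : chi C w = 1 := if_pos hcond
      set x : Fin I → ℕ := iter (fbar C) C (List.ofFn w) with hxdef
      have hxX : ∀ p, x p ≤ C p := iter_Xspace _ C (fun p => le_refl _)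
      have hx0 : x ≠ 0 := by
        have := hcond t le_rfl
        rwa [List.take_of_length_le (by rw [List.length_ofFn])] at this
      have hdrift := drift_step hC hlamnn hΛpos hlamI hs hν1 x hxX hx0
      have hgs : ∀ e : Ev I, gw C (Fin.snoc w e : Fin (t+1) → Ev I)
          = ((∑ p, fbar C x e p : ℕ) : ℝ≥0∞) := fun e => gw_snoc w e
      have hgw : gw C w = ((∑ p, x p : ℕ) : ℝ≥0∞) := rfl
      calc (chi C w * ∏ s : Fin t, ν (w s))
            * (∑' e : Ev I, ν e * gw C (Fin.snoc w e : Fin (t+1) → Ev I))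
          + (chi C w * ∏ s : Fin t, ν (w s)) * δE
          = (chi C w * ∏ s : Fin t, ν (w s))
            * ((∑' e : Ev I, ν e * ((∑ p, fbar C x e p : ℕ) : ℝ≥0∞)) + δE) := by
            rw [tsum_congr (fun e => by rw [hgs e])]
            ring
        _ ≤ (chi C w * ∏ s : Fin t, ν (w s)) * ((∑ p, x p : ℕ) : ℝ≥0∞) :=
            mul_le_mul_right hdrift _
        _ = chi C w * gw C w * ∏ s : Fin t, ν (w s) := by rw [hgw]; ring
    · have hchi : chi C w = 0 := if_neg hcond
      rw [hchi]
      simp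
  -- assemble
  have h5 : (∑' w : Fin t → Ev I, (chi C w * ∏ s : Fin t, ν (w s))
          * (∑' e : Ev I, ν e * gw C (Fin.snoc w e : Fin (t+1) → Ev I)))
        + δE * (∑' w : Fin t → Ev I, chi C w * ∏ s : Fin t, ν (w s))
      ≤ ∑' w : Fin t → Ev I, chi C w * gw C w * ∏ s : Fin t, ν (w s) := by
    have hδ : δE * (∑' w : Fin t → Ev I, chi C w * ∏ s : Fin t, ν (w s))
        = ∑' w : Fin t → Ev I, (chi C w * ∏ s : Fin t, ν (w s)) * δE := by
      rw [← ENNReal.tsum_mul_left]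
      exact tsum_congr (fun w => by ring)
    rw [hδ, ← ENNReal.tsum_add]
    exact ENNReal.tsum_le_tsum h4
  calc (∑' v : Fin (t+1) → Ev I, chi C v * gw C v * ∏ s : Fin (t+1), ν (v s))
        + δE * (∑' w : Fin t → Ev I, chi C w * ∏ s : Fin t, ν (w s))
      ≤ (∑' w : Fin t → Ev I, (chi C w * ∏ s : Fin t, ν (w s))
          * (∑' e : Ev I, ν e * gw C (Fin.snoc w e : Fin (t+1) → Ev I)))
        + δE * (∑' w : Fin t → Ev I, chi C w * ∏ s : Fin t, ν (w s)) := by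
        gcongr
        rw [h1]
        exact h2.trans (le_of_eq h3)
    _ ≤ _ := h5

end Words

section Final

variable {I : ℕ} {C : Fin I → ℕ} {lam : Finset (Fin I) → ℝ} {μv Λ : ℝ}
  {P : Measure (ℕ → Ev I)}

lemma tsum_probJ_eq_one [IsProbabilityMeasure P]
    (hiid : ∀ (T : Finset ℕ) (u : ℕ → Ev I),
        P {ω | ∀ t ∈ T, ω t = u t} = ∏ t ∈ T, probJ C lam μv Λ (u t)) :
    ∑' e : Ev I, probJ C lam μv Λ e = 1 := by
  have hmeas : ∀ e : Ev I, MeasurableSet {ω : ℕ → Ev I | ω 1 = e} := by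
    intro e
    have : {ω : ℕ → Ev I | ω 1 = e} = (fun ω : ℕ → Ev I => ω 1) ⁻¹' {e} := rfl
    rw [this]
    exact (measurable_pi_apply 1) (measurableSet_ev _)
  have hdisj : Pairwise (Function.onFun Disjoint (fun e : Ev I => {ω : ℕ → Ev I | ω 1 = e})) := by
    intro a b hab
    rw [Function.onFun, Set.disjoint_left]
    intro ω h1 h2
    exact hab (h1.symm.trans h2)
  have hcover : (⋃ e : Ev I, {ω : ℕ → Ev I | ω 1 = e}) = Set.univ := by
    ext ω
    simp only [Set.mem_iUnion, Set.mem_setOf_eq, Set.mem_univ, iff_true]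
    exact ⟨ω 1, rfl⟩
  have hPe : ∀ e : Ev I, P {ω : ℕ → Ev I | ω 1 = e} = probJ C lam μv Λ e := by
    intro e
    have hset : {ω : ℕ → Ev I | ∀ t ∈ ({1} : Finset ℕ), ω t = e} = {ω : ℕ → Ev I | ω 1 = e} := by
      ext ω
      simp
    rw [← hset, hiid ({1} : Finset ℕ) (fun _ => e)]
    simp
  calc (∑' e : Ev I, probJ C lam μv Λ e)
      = ∑' e : Ev I, P {ω : ℕ → Ev I | ω 1 = e} := tsum_congr (fun e => (hPe e).symm)
    _ = P (⋃ e : Ev I, {ω : ℕ → Ev I | ω 1 = e}) := (measure_iUnion hdisj hmeas).symm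
    _ = 1 := by rw [hcover]; exact measure_univ

lemma chi_zero_word (hC : ∀ i, 1 ≤ C i) (hI : 1 ≤ I) (w : Fin 0 → Ev I) :
    chi C w = 1 := by
  unfold chi
  rw [if_pos]
  intro s _
  have h1 : (List.ofFn w : List (Ev I)) = [] := by simp
  rw [h1, List.take_nil]
  show (C : Fin I → ℕ) ≠ 0
  intro hc
  have := congrFun hc ⟨0, by omega⟩
  simp only [Pi.zero_apply] at this
  have := hC ⟨0, by omega⟩
  omega

lemma Wt_zero (hC : ∀ i, 1 ≤ C i) (hI : 1 ≤ I) :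
    (∑' w : Fin 0 → Ev I, chi C w * gw C w * ∏ s : Fin 0, probJ C lam μv Λ (w s))
      = ((∑ i, C i : ℕ) : ℝ≥0∞) := by
  rw [tsum_eq_single (fun s : Fin 0 => Ev.d ∅) ?_]
  · rw [chi_zero_word hC hI]
    have hg : gw C (fun s : Fin 0 => Ev.d ∅) = ((∑ i, C i : ℕ) : ℝ≥0∞) := by
      unfold gw
      congr 1
    rw [hg]
    simp
  · intro w hw
    exact absurd (funext (fun s : Fin 0 => s.elim0)) hw

end Final

/-- Lemma C.1: hitting time to zero of the supremum chain started from the full state. -/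
theorem stmt18 (I : ℕ) (hI : 1 ≤ I) (C : Fin I → ℕ) (hC : ∀ i, 1 ≤ C i)
    (lam : Finset (Fin I) → ℝ) (hlamnn : ∀ A, 0 ≤ lam A) (hlam0 : lam ∅ = 0)
    (μv : ℝ) (hμv : 0 < μv)
    (Λ : ℝ) (hΛ : Λ = (∑ A : Finset (Fin I), lam A) + μv * ∑ i, (C i : ℝ))
    (lamI : Fin I → ℝ)
    (hlamI : ∀ i, lamI i = ∑ A ∈ Finset.univ.filter (fun A => i ∈ A), lam A)
    (P : Measure (ℕ → Ev I)) [IsProbabilityMeasure P]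
    (hiid : ∀ (T : Finset ℕ) (u : ℕ → Ev I),
        P {ω | ∀ t ∈ T, ω t = u t} = ∏ t ∈ T, probJ C lam μv Λ (u t))
    (hs : ∑ i, lamI i < μv) :
    ∫⁻ ω, sInf {r : ℝ≥0∞ | ∃ t : ℕ, r = t ∧ iter (fbar C) C (fword ω t) = 0} ∂P
      ≤ ENNReal.ofReal (Λ * (∑ i, (C i : ℝ)) / (μv - ∑ i, lamI i)) := by
  classical
  haveI : Nonempty (Fin I) := ⟨⟨0, by omega⟩⟩
  have hSnn : 0 ≤ ∑ i, lamI i :=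
    Finset.sum_nonneg (fun i _ => by
      rw [hlamI i]; exact Finset.sum_nonneg (fun A _ => hlamnn A))
  have hC1 : (1:ℝ) ≤ ∑ i, (C i : ℝ) := by
    obtain ⟨i0⟩ := (inferInstance : Nonempty (Fin I))
    calc (1:ℝ) ≤ (C i0 : ℝ) := by exact_mod_cast hC i0
      _ ≤ ∑ i, (C i : ℝ) := Finset.single_le_sum (f := fun i => (C i : ℝ))
        (fun i _ => by positivity) (Finset.mem_univ i0)
  have hΛpos : 0 < Λ := by
    rw [hΛ]
    have h1 : 0 ≤ ∑ A : Finset (Fin I), lam A := Finset.sum_nonneg (fun A _ => hlamnn A)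
    nlinarith
  have hν1 : ∑' e : Ev I, probJ C lam μv Λ e = 1 := tsum_probJ_eq_one hiid
  set δ : ℝ := (μv - ∑ i, lamI i)/Λ with hδdef
  have hδpos : 0 < δ := div_pos (by linarith) hΛpos
  set At : ℕ → Set (ℕ → Ev I) :=
    fun t => {ω | ∀ s ≤ t, iter (fbar C) C (fword ω s) ≠ 0} with hAtdef
  have hAtmeas : ∀ t, MeasurableSet (At t) := by
    intro t
    have hset : At t = (fun ω : ℕ → Ev I => (fun r : Fin t => ω (r.val + 1))) ⁻¹'
        {w : Fin t → Ev I | ∀ s ≤ t, iter (fbar C) C ((List.ofFn w).take s) ≠ 0} := by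
      ext ω
      exact mem_At_iff C t ω
    rw [hset]
    exact measurable_word t (measurableSet_pi_ev _)
  have htau : ∀ ω : ℕ → Ev I,
      sInf {r : ℝ≥0∞ | ∃ t : ℕ, r = t ∧ iter (fbar C) C (fword ω t) = 0}
        = ∑' t : ℕ, (At t).indicator (fun _ => (1:ℝ≥0∞)) ω := by
    intro ω
    by_cases hhit : ∃ t : ℕ, iter (fbar C) C (fword ω t) = 0
    · set m := Nat.find hhit with hm
      have hm0 : iter (fbar C) C (fword ω m) = 0 := Nat.find_spec hhit
      have hmmin : ∀ s, s < m → iter (fbar C) C (fword ω s) ≠ 0 :=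
        fun s hs => Nat.find_min hhit hs
      have hind : ∀ t : ℕ, (At t).indicator (fun _ => (1:ℝ≥0∞)) ω
          = if t < m then 1 else 0 := by
        intro t
        by_cases htm : t < m
        · rw [if_pos htm, Set.indicator_of_mem]
          exact fun s hs => hmmin s (by omega)
        · rw [if_neg htm, Set.indicator_of_notMem]
          intro hc
          exact hc m (by omega) hm0
      rw [tsum_congr hind]
      have hsum : (∑' t : ℕ, if t < m then (1:ℝ≥0∞) else 0) = m := by
        rw [tsum_eq_sum (s := Finset.range m) (fun t ht => if_neg (by simpa using ht))]
        rw [Finset.sum_congr rfl (fun t ht => if_pos (Finset.mem_range.1 ht))]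
        simp
      rw [hsum]
      apply le_antisymm
      · exact sInf_le ⟨m, rfl, hm0⟩
      · apply le_sInf
        rintro r ⟨t, rfl, ht0⟩
        exact_mod_cast Nat.cast_le.2 (Nat.find_min' hhit ht0)
    · have hset : {r : ℝ≥0∞ | ∃ t : ℕ, r = t ∧ iter (fbar C) C (fword ω t) = 0} = ∅ := by
        ext r
        simp only [Set.mem_setOf_eq, Set.mem_empty_iff_false, iff_false]
        rintro ⟨t, rfl, ht⟩
        exact hhit ⟨t, ht⟩
      rw [hset, sInf_empty]
      have hind : ∀ t : ℕ, (At t).indicator (fun _ => (1:ℝ≥0∞)) ω = 1 := by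
        intro t
        rw [Set.indicator_of_mem]
        intro s _ hc
        exact hhit ⟨s, hc⟩
      rw [tsum_congr hind]
      exact (ENNReal.tsum_const_eq_top_of_ne_zero one_ne_zero).symm
  have hint : (∫⁻ ω, sInf {r : ℝ≥0∞ | ∃ t : ℕ, r = t
        ∧ iter (fbar C) C (fword ω t) = 0} ∂P)
      = ∑' t : ℕ, P (At t) := by
    calc (∫⁻ ω, sInf {r : ℝ≥0∞ | ∃ t : ℕ, r = t ∧ iter (fbar C) C (fword ω t) = 0} ∂P)
        = ∫⁻ ω, ∑' t : ℕ, (At t).indicator (fun _ => (1:ℝ≥0∞)) ω ∂P := lintegral_congr htau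
      _ = ∑' t : ℕ, ∫⁻ ω, (At t).indicator (fun _ => (1:ℝ≥0∞)) ω ∂P :=
          lintegral_tsum (fun t => (measurable_const.indicator (hAtmeas t)).aemeasurable)
      _ = ∑' t : ℕ, P (At t) := tsum_congr (fun t => lintegral_indicator_one (hAtmeas t))
  have hPAt : ∀ t, P (At t)
      = ∑' w : Fin t → Ev I, chi C w * ∏ s : Fin t, probJ C lam μv Λ (w s) :=
    fun t => P_At hiid t
  have hinduct : ∀ T : ℕ, ENNReal.ofReal δ * (∑ t ∈ Finset.range T, P (At t))
      + (∑' w : Fin T → Ev I, chi C w * gw C w * ∏ s : Fin T, probJ C lam μv Λ (w s))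
      ≤ ((∑ i, C i : ℕ) : ℝ≥0∞) := by
    intro T
    induction T with
    | zero =>
        rw [Finset.range_zero, Finset.sum_empty, mul_zero, zero_add, Wt_zero hC hI]
    | succ T ih =>
        rw [Finset.sum_range_succ, mul_add, hPAt T]
        have hstep := step_ineq (C := C) hC hlamnn hΛpos hlamI hs hν1 T
        calc ENNReal.ofReal δ * (∑ t ∈ Finset.range T, P (At t))
              + ENNReal.ofReal δ
                * (∑' w : Fin T → Ev I, chi C w * ∏ s : Fin T, probJ C lam μv Λ (w s))
              + (∑' w : Fin (T+1) → Ev I,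
                  chi C w * gw C w * ∏ s : Fin (T+1), probJ C lam μv Λ (w s))
            = ENNReal.ofReal δ * (∑ t ∈ Finset.range T, P (At t))
              + ((∑' w : Fin (T+1) → Ev I,
                  chi C w * gw C w * ∏ s : Fin (T+1), probJ C lam μv Λ (w s))
                + ENNReal.ofReal δ
                  * (∑' w : Fin T → Ev I, chi C w * ∏ s : Fin T, probJ C lam μv Λ (w s))) := by
              ring
          _ ≤ ENNReal.ofReal δ * (∑ t ∈ Finset.range T, P (At t))
              + (∑' w : Fin T → Ev I, chi C w * gw C w * ∏ s : Fin T, probJ C lam μv Λ (w s)) :=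
              add_le_add_right hstep _
          _ ≤ _ := ih
  have hsum_bound : ENNReal.ofReal δ * (∑' t : ℕ, P (At t)) ≤ ((∑ i, C i : ℕ) : ℝ≥0∞) := by
    rw [ENNReal.tsum_eq_iSup_nat, ENNReal.mul_iSup]
    apply iSup_le
    intro T
    calc ENNReal.ofReal δ * (∑ t ∈ Finset.range T, P (At t))
        ≤ ENNReal.ofReal δ * (∑ t ∈ Finset.range T, P (At t))
          + (∑' w : Fin T → Ev I, chi C w * gw C w * ∏ s : Fin T, probJ C lam μv Λ (w s)) :=
          le_self_add
      _ ≤ _ := hinduct T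
  have hδne0 : ENNReal.ofReal δ ≠ 0 := (ENNReal.ofReal_pos.2 hδpos).ne'
  have hδnetop : ENNReal.ofReal δ ≠ ⊤ := ENNReal.ofReal_ne_top
  have hfinal : (∑' t : ℕ, P (At t)) ≤ ((∑ i, C i : ℕ) : ℝ≥0∞) / ENNReal.ofReal δ := by
    rw [ENNReal.le_div_iff_mul_le (Or.inl hδne0) (Or.inl hδnetop), mul_comm]
    exact hsum_bound
  rw [hint]
  refine hfinal.trans ?_
  have hcast : ((∑ i, C i : ℕ) : ℝ≥0∞) = ENNReal.ofReal ((∑ i, C i : ℕ) : ℝ) :=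
    (ENNReal.ofReal_natCast _).symm
  rw [hcast, ← ENNReal.ofReal_div_of_pos hδpos]
  apply ENNReal.ofReal_le_ofReal
  have hceq : ((∑ i, C i : ℕ) : ℝ) = ∑ i, (C i : ℝ) := by push_cast; rfl
  rw [hδdef, hceq]
  have hne : μv - ∑ i, lamI i ≠ 0 := by linarith
  rw [div_div_eq_mul_div]
  exact le_of_eq (by ring)


end ATO
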